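/- Let C be a simple closed polygonal curve and let S_1,...,S_{3t} be pairwise disjoint sets such that for each i in {1,...,t} the triple (S_{3i-2}, S_{3i-1}, S_{3i}) is crossed by C in order, i.e., there exist points p_j in S_j lying on C appearing in index order along a cyclic traversal of C, and no straight-line segment contained in C's ambient free space passes through points of S_{3i-2}, S_{3i-1}, S_{3i} in that order. If, additionally, consecutive triples are non-overlapping (no two straight-line segments jointly realize all six sets of two consecutive triples in order), then C consists of at least t straight-line segments. -/

import Mathlib

/-- A closed polygonal curve given by its cyclic list of `m` vertices. -/
structure PolyCurve (m : ℕ) where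
  v : Fin m → ℝ × ℝ

/-- The cyclic successor of an index. -/
def nxt {m : ℕ} (i : Fin m) : Fin m := ⟨(i.val + 1) % m, Nat.mod_lt _ i.pos⟩

/-- The boundary (trace) of a closed polygonal curve: the union of its segments. -/
def PolyCurve.boundary {m : ℕ} (C : PolyCurve m) : Set (ℝ × ℝ) :=
  ⋃ i : Fin m, segment ℝ (C.v i) (C.v (nxt i))

/-- Simplicity: distinct segments meet only in shared segment endpoints. -/
def PolyCurve.Simple {m : ℕ} (C : PolyCurve m) : Prop :=
  ∀ i j : Fin m, i ≠ j →
    segment ℝ (C.v i) (C.v (nxt i)) ∩ segment ℝ (C.v j) (C.v (nxt j)) ⊆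
      {C.v i, C.v (nxt i), C.v j, C.v (nxt j)}

/-- Point on segment `i` of the curve with affine parameter `t`. -/
noncomputable def PolyCurve.posOn {m : ℕ} (C : PolyCurve m) (i : Fin m) (t : ℝ) : ℝ × ℝ :=
  AffineMap.lineMap (C.v i) (C.v (nxt i)) t

/-- Lexicographic comparison of positions (segment index after a cyclic shift,
affine parameter) along a cyclic traversal. -/
def lexLe (a b : ℕ × ℝ) : Prop := a.1 < b.1 ∨ (a.1 = b.1 ∧ a.2 ≤ b.2)

/-- The curve crosses the sets `S 0, …, S (k-1)` in order: it contains points of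
each of the sets, appearing in index order along some cyclic traversal. -/
def CrossesInOrder {m : ℕ} (C : PolyCurve m) {k : ℕ} (S : Fin k → Set (ℝ × ℝ)) : Prop :=
  ∃ (o : Fin m) (idx : Fin k → Fin m) (t : Fin k → ℝ),
    (∀ j, t j ∈ Set.Icc (0 : ℝ) 1 ∧ C.posOn (idx j) (t j) ∈ S j) ∧
    (∀ j j' : Fin k, j ≤ j' →
      lexLe (((idx j - o : Fin m) : ℕ), t j) (((idx j' - o : Fin m) : ℕ), t j'))

/-- `(S1,S2,S3)` is a non-collinear triple w.r.t. free space `D`: no straight-line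
segment inside `D` passes through points of `S1`, `S2`, `S3` in this order. -/
def NoncollinearTriple (D : Set (ℝ × ℝ)) (S1 S2 S3 : Set (ℝ × ℝ)) : Prop :=
  ¬ ∃ p1 ∈ S1, ∃ p2 ∈ S2, ∃ p3 ∈ S3,
      p2 ∈ segment ℝ p1 p3 ∧ segment ℝ p1 p3 ⊆ D

/-- Two consecutive triples (six sets `S 0, …, S 5`) are non-overlapping: no two
straight-line segments inside `D` jointly visit all six sets in order. -/
def NonOverlapping (D : Set (ℝ × ℝ)) (S : Fin 6 → Set (ℝ × ℝ)) : Prop :=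
  ¬ ∃ (a b c d : ℝ × ℝ) (p : Fin 6 → ℝ × ℝ) (u : Fin 6 → ℝ) (jj : ℕ),
      segment ℝ a b ⊆ D ∧ segment ℝ c d ⊆ D ∧
      (∀ i, p i ∈ S i ∧ u i ∈ Set.Icc (0 : ℝ) 1) ∧
      (∀ i : Fin 6, ((i : ℕ) < jj → p i = AffineMap.lineMap a b (u i)) ∧
        (jj ≤ (i : ℕ) → p i = AffineMap.lineMap c d (u i))) ∧
      (∀ i i' : Fin 6, i ≤ i' → (((i' : ℕ) < jj) ∨ (jj ≤ (i : ℕ))) → u i ≤ u i')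

/-- a simple closed polygonal curve crossing `t` pairwise disjoint,
consecutive-non-overlapping, non-collinear triples in order consists of at
least `t` straight-line segments. -/
theorem stmt_1 (m t : ℕ) (ht : 0 < t) (C : PolyCurve m) (hC : C.Simple)
    (D : Set (ℝ × ℝ)) (hD : C.boundary ⊆ D)
    (S : Fin (3 * t) → Set (ℝ × ℝ))
    (hdisj : ∀ i j, i ≠ j → Disjoint (S i) (S j))
    (htriple : ∀ i : Fin t,
      NoncollinearTriple D (S ⟨3 * i.val, by have := i.isLt; omega⟩)
        (S ⟨3 * i.val + 1, by have := i.isLt; omega⟩)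
        (S ⟨3 * i.val + 2, by have := i.isLt; omega⟩))
    (hnov : ∀ i : Fin t, NonOverlapping D
      (fun r : Fin 6 => S ⟨(3 * i.val + r.val) % (3 * t), Nat.mod_lt _ (by omega)⟩))
    (hcross : CrossesInOrder C S) :
    t ≤ m := by
  obtain ⟨o, idx, tt, hmem, hord⟩ := hcross
  haveI : NeZero m := ⟨o.pos.ne'⟩
  have hmono : ∀ j j' : Fin (3 * t), j ≤ j' →
      ((idx j - o : Fin m) : ℕ) ≤ ((idx j' - o : Fin m) : ℕ) := by
    intro j j' h
    rcases hord j j' h with h | h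
    · exact h.le
    · exact h.1.le
  have key : ∀ n, ∀ hn : n < t,
      ((idx ⟨3 * n, by omega⟩ - o : Fin m) : ℕ) <
      ((idx ⟨3 * n + 2, by omega⟩ - o : Fin m) : ℕ) := by
    intro n hn
    set i : Fin t := ⟨n, hn⟩ with hidef
    have hi := i.isLt
    have h0 : 3 * n < 3 * t := by omega
    have h1 : 3 * n + 1 < 3 * t := by omega
    have h2 : 3 * n + 2 < 3 * t := by omega
    set j0 : Fin (3 * t) := ⟨3 * n, h0⟩ with hj0
    set j1 : Fin (3 * t) := ⟨3 * n + 1, h1⟩ with hj1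
    set j2 : Fin (3 * t) := ⟨3 * n + 2, h2⟩ with hj2
    by_contra hle
    have le01 : j0 ≤ j1 := by simp [hj0, hj1, Fin.mk_le_mk]
    have le12 : j1 ≤ j2 := by simp [hj1, hj2, Fin.mk_le_mk]
    have h01 := hmono _ _ le01
    have h12 := hmono _ _ le12
    have he0 : ((idx j2 - o : Fin m) : ℕ) = ((idx j0 - o : Fin m) : ℕ) := by omega
    have he1 : ((idx j1 - o : Fin m) : ℕ) = ((idx j0 - o : Fin m) : ℕ) := by omega
    have hidx2 : idx j2 = idx j0 := sub_left_injective (Fin.ext he0)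
    have hidx1 : idx j1 = idx j0 := sub_left_injective (Fin.ext he1)
    have ht01 : tt j0 ≤ tt j1 := by
      rcases hord j0 j1 le01 with h | h
      · omega
      · exact h.2
    have ht12 : tt j1 ≤ tt j2 := by
      rcases hord j1 j2 le12 with h | h
      · omega
      · exact h.2
    have hm0 := hmem j0
    have hm1 := hmem j1
    have hm2 := hmem j2
    rw [hidx1] at hm1
    rw [hidx2] at hm2
    simp only [PolyCurve.posOn] at hm0 hm1 hm2
    set v := C.v (idx j0) with hv
    set w := C.v (nxt (idx j0)) with hw
    have hmem1 : AffineMap.lineMap v w (tt j0) ∈ segment ℝ v w := by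
      rw [segment_eq_image_lineMap]
      exact ⟨tt j0, hm0.1, rfl⟩
    have hmem3 : AffineMap.lineMap v w (tt j2) ∈ segment ℝ v w := by
      rw [segment_eq_image_lineMap]
      exact ⟨tt j2, hm2.1, rfl⟩
    have hbetween : AffineMap.lineMap v w (tt j1) ∈
        segment ℝ (AffineMap.lineMap v w (tt j0)) (AffineMap.lineMap v w (tt j2)) := by
      rcases eq_or_lt_of_le (le_trans ht01 ht12) with hEq | hlt
      · have h1' : tt j1 = tt j0 := le_antisymm (hEq ▸ ht12) ht01
        rw [h1']
        exact left_mem_segment ℝ _ _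
      · set s : ℝ := (tt j1 - tt j0) / (tt j2 - tt j0) with hs
        have hne : tt j2 - tt j0 ≠ 0 := by linarith
        have hs0 : 0 ≤ s := div_nonneg (by linarith) (by linarith)
        have hs1 : s ≤ 1 := by rw [div_le_one (by linarith)]; linarith
        have hseq : s * (tt j2 - tt j0) = tt j1 - tt j0 := div_mul_cancel₀ _ hne
        refine ⟨1 - s, s, by linarith, hs0, by ring, ?_⟩
        simp only [AffineMap.lineMap_apply_module]
        match_scalars
        · linear_combination -hseq
        · linear_combination hseq
    have hsubD : segment ℝ (AffineMap.lineMap v w (tt j0)) (AffineMap.lineMap v w (tt j2)) ⊆ D := by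
      intro x hx
      apply hD
      exact Set.mem_iUnion.mpr ⟨idx j0, (convex_segment v w).segment_subset hmem1 hmem3 hx⟩
    exact htriple i ⟨_, hm0.2, _, hm1.2, _, hm2.2, hbetween, hsubD⟩
  have main : ∀ n, ∀ hn : n < t, n + 1 ≤ ((idx ⟨3 * n + 2, by omega⟩ - o : Fin m) : ℕ) := by
    intro n
    induction n with
    | zero =>
      intro hn
      have := key 0 hn
      omega
    | succ k ih =>
      intro hn
      have h1 := ih (by omega)
      have h2 := hmono ⟨3 * k + 2, by omega⟩ ⟨3 * (k + 1), by omega⟩ (by simp [Fin.mk_le_mk]; omega)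
      have h3 := key (k + 1) hn
      omega
  have hfin := main (t - 1) (by omega)
  have hlt : ((idx ⟨3 * (t - 1) + 2, by omega⟩ - o : Fin m) : ℕ) < m := (Fin.is_lt _)
  omega
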